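/- arXiv:1310.8532 — 2 statements merged into one kernel-verified Lean document; each statement's English description precedes it below -/
import Mathlib

section
/- Suppose f is continuous on (0,∞), ∫₁^∞ log(γ) f(γ) dγ < ∞, and t·f(t)/(1 − F(t)) → ∞ as t → ∞. Then I(λ)/(λ·G(λ)) → 1 as λ → ∞; i.e. the ergodic capacity satisfies C(P̄) ≈ λ(P̄)·P̄ at asymptotically low average power, where λ(P̄) is the water level with G(λ(P̄)) = P̄. (Theorem 2, capacity formula, l = ∞ case, covering Rayleigh, Rician and Nakagami fading.) -/
open MeasureTheory Filter Set Topology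

/-- The cumulative distribution function `F(t) = ∫₀^t f(γ) dγ`. -/
noncomputable def Fcdf (f : ℝ → ℝ) (t : ℝ) : ℝ := ∫ γ in (0:ℝ)..t, f γ

/-- The average-power function `G(t) = ∫_t^∞ (1/t − 1/γ) f(γ) dγ`. -/
noncomputable def Gfun (f : ℝ → ℝ) (t : ℝ) : ℝ := ∫ γ in Set.Ioi t, (1/t - 1/γ) * f γ

/-- The water-filling rate function `I(t) = ∫_t^∞ log(γ/t) f(γ) dγ`. -/
noncomputable def Ifun (f : ℝ → ℝ) (t : ℝ) : ℝ := ∫ γ in Set.Ioi t, Real.log (γ / t) * f γ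

lemma tail_split {g : ℝ → ℝ} {c t : ℝ} (h : c ≤ t) (hg : IntegrableOn g (Set.Ioi c)) :
    ∫ x in Set.Ioi c, g x = (∫ x in c..t, g x) + ∫ x in Set.Ioi t, g x := by
  rw [intervalIntegral.integral_of_le h, ← Set.Ioc_union_Ioi_eq_Ioi h,
    setIntegral_union Set.Ioc_disjoint_Ioi_same measurableSet_Ioi
      (hg.mono_set (by rw [← Set.Ioc_union_Ioi_eq_Ioi h]; exact Set.subset_union_left))
      (hg.mono_set (by rw [← Set.Ioc_union_Ioi_eq_Ioi h]; exact Set.subset_union_right))]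

lemma tail_tendsto_zero {g : ℝ → ℝ} {c : ℝ} (hg : IntegrableOn g (Set.Ioi c)) :
    Tendsto (fun t => ∫ x in Set.Ioi t, g x) atTop (𝓝 0) := by
  have h1 : Tendsto (fun t => (∫ x in Set.Ioi c, g x) - ∫ x in c..t, g x) atTop
      (𝓝 ((∫ x in Set.Ioi c, g x) - ∫ x in Set.Ioi c, g x)) :=
    tendsto_const_nhds.sub (intervalIntegral_tendsto_integral_Ioi c hg tendsto_id)
  rw [sub_self] at h1
  refine h1.congr' ?_
  filter_upwards [eventually_ge_atTop c] with t ht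
  rw [tail_split ht hg]; ring

lemma tail_hasDerivAt {g : ℝ → ℝ} {c t : ℝ} (hg : IntegrableOn g (Set.Ioi c)) (hct : c < t)
    (hm : StronglyMeasurableAtFilter g (𝓝 t)) (hcont : ContinuousAt g t) :
    HasDerivAt (fun u => ∫ x in Set.Ioi u, g x) (-g t) t := by
  have hii : IntervalIntegrable g volume c t :=
    (intervalIntegrable_iff_integrableOn_Ioc_of_le (le_of_lt hct)).2 (hg.mono_set Set.Ioc_subset_Ioi_self)
  have hd : HasDerivAt (fun u => (∫ x in Set.Ioi c, g x) - ∫ x in c..u, g x) (-g t) t :=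
    (intervalIntegral.integral_hasDerivAt_right hii hm hcont).const_sub _
  refine hd.congr_of_eventuallyEq ?_
  filter_upwards [Ioi_mem_nhds hct] with u hu
  rw [tail_split (le_of_lt hu) hg]; ring

/-- Theorem 2 (capacity formula, `l = ∞` case): if the generalized failure rate
tends to `∞`, then `I(λ)/(λ·G(λ)) → 1` as `λ → ∞`, i.e. the ergodic capacity
satisfies `C(P̄) ≈ λ(P̄)·P̄` at asymptotically low power. -/
theorem capacity_asymptotics_GFR_infinite (f : ℝ → ℝ)
    (hnn : ∀ x, 0 ≤ f x)
    (hzero : ∀ x ≤ (0:ℝ), f x = 0)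
    (hcont : ContinuousOn f (Set.Ioi (0:ℝ)))
    (hint : IntegrableOn f (Set.Ioi (0:ℝ)))
    (hone : ∫ γ in Set.Ioi (0:ℝ), f γ = 1)
    (hsupp : ∀ t > (0:ℝ), Fcdf f t < 1)
    (hlog : IntegrableOn (fun γ => Real.log γ * f γ) (Set.Ioi (1:ℝ)))
    (hGFR : Tendsto (fun t => t * f t / (1 - Fcdf f t)) atTop atTop) :
    Tendsto (fun lam => Ifun f lam / (lam * Gfun f lam)) atTop (nhds 1) := by
  -- tail functions
  set T : ℝ → ℝ := fun t => ∫ γ in Set.Ioi t, f γ with hTdef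
  set B : ℝ → ℝ := fun t => ∫ γ in Set.Ioi t, (1/γ) * f γ with hBdef
  set A : ℝ → ℝ := fun t => ∫ γ in Set.Ioi t, Real.log γ * f γ with hAdef
  set D : ℝ → ℝ := fun t => t * Gfun f t with hDdef
  -- basic integrabilities
  have hfm : AEStronglyMeasurable f (volume.restrict (Set.Ioi (0:ℝ))) := hint.aestronglyMeasurable
  have hintt : ∀ t : ℝ, 0 ≤ t → IntegrableOn f (Set.Ioi t) :=
    fun t ht => hint.mono_set (Set.Ioi_subset_Ioi ht)
  have hBm : AEStronglyMeasurable (fun γ : ℝ => (1/γ) * f γ) (volume.restrict (Set.Ioi (0:ℝ))) := by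
    exact ((measurable_const.div measurable_id).aestronglyMeasurable).mul hfm
  have hBint : ∀ t : ℝ, 0 < t → IntegrableOn (fun γ : ℝ => (1/γ) * f γ) (Set.Ioi t) := by
    intro t ht
    refine Integrable.mono ((hintt t (le_of_lt ht)).const_mul (1/t))
      (hBm.mono_set (Set.Ioi_subset_Ioi (le_of_lt ht))) ?_
    filter_upwards [ae_restrict_mem measurableSet_Ioi] with γ hγ
    have hγ0 : (0:ℝ) < γ := lt_trans ht hγ
    rw [Real.norm_eq_abs, Real.norm_eq_abs, abs_of_nonneg (mul_nonneg (by positivity) (hnn γ)),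
      abs_of_nonneg (mul_nonneg (by positivity) (hnn γ))]
    have : 1/γ ≤ 1/t := by
      apply one_div_le_one_div_of_le ht (le_of_lt hγ)
    exact mul_le_mul_of_nonneg_right this (hnn γ)
  have hlogt : ∀ t : ℝ, 1 ≤ t → IntegrableOn (fun γ => Real.log γ * f γ) (Set.Ioi t) :=
    fun t ht => hlog.mono_set (Set.Ioi_subset_Ioi ht)
  -- T t = 1 - Fcdf f t for t ≥ 0
  have hTF : ∀ t : ℝ, 0 ≤ t → T t = 1 - Fcdf f t := by
    intro t ht
    have := tail_split ht hint
    rw [hone] at this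
    simp only [hTdef, Fcdf]
    linarith [this]
  have hTpos : ∀ t : ℝ, 0 < t → 0 < T t := by
    intro t ht
    rw [hTF t (le_of_lt ht)]
    linarith [hsupp t ht]
  have hTnn : ∀ t : ℝ, 0 ≤ t → 0 ≤ T t :=
    fun t ht => setIntegral_nonneg measurableSet_Ioi (fun γ _ => hnn γ)
  -- tendsto 0
  have hTtend : Tendsto T atTop (𝓝 0) := tail_tendsto_zero hint
  have hAtend : Tendsto A atTop (𝓝 0) := tail_tendsto_zero hlog
  -- Ifun rewriting
  have hI_eq : ∀ t : ℝ, 1 ≤ t → Ifun f t = A t - Real.log t * T t := by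
    intro t ht
    have ht0 : (0:ℝ) < t := lt_of_lt_of_le one_pos ht
    have h1 : Ifun f t = ∫ γ in Set.Ioi t, (Real.log γ * f γ - Real.log t * f γ) := by
      refine setIntegral_congr_fun measurableSet_Ioi ?_
      intro γ hγ
      have hγ0 : (0:ℝ) < γ := lt_trans ht0 hγ
      show Real.log (γ / t) * f γ = Real.log γ * f γ - Real.log t * f γ
      rw [Real.log_div (ne_of_gt hγ0) (ne_of_gt ht0)]
      ring
    rw [h1, integral_sub (hlogt t ht) ((hintt t (le_of_lt ht0)).const_mul _), integral_const_mul]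
  have hD_eq : ∀ t : ℝ, 0 < t → D t = T t - t * B t := by
    intro t ht
    have h1 : Gfun f t = ∫ γ in Set.Ioi t, ((1/t) * f γ - (1/γ) * f γ) := by
      refine setIntegral_congr_fun measurableSet_Ioi ?_
      intro γ hγ
      show (1/t - 1/γ) * f γ = (1/t) * f γ - (1/γ) * f γ
      ring
    have h2 : Gfun f t = (1/t) * T t - B t := by
      rw [h1, integral_sub ((hintt t (le_of_lt ht)).const_mul _) (hBint t ht), integral_const_mul]
    simp only [hDdef]
    rw [h2]
    field_simp
  -- derivatives
  have hT' : ∀ t : ℝ, 0 < t → HasDerivAt T (-f t) t := by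
    intro t ht
    exact tail_hasDerivAt hint ht
      (ContinuousOn.stronglyMeasurableAtFilter isOpen_Ioi hcont t ht)
      (hcont.continuousAt (Ioi_mem_nhds ht))
  have hcontB : ContinuousOn (fun γ : ℝ => (1/γ) * f γ) (Set.Ioi (0:ℝ)) := by
    exact (continuousOn_const.div continuousOn_id (fun γ hγ => ne_of_gt hγ)).mul hcont
  have hB' : ∀ t : ℝ, 0 < t → HasDerivAt B (-((1/t) * f t)) t := by
    intro t ht
    exact tail_hasDerivAt (hBint _ (half_pos ht)) (by linarith)
      (ContinuousOn.stronglyMeasurableAtFilter isOpen_Ioi hcontB t ht)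
      (hcontB.continuousAt (Ioi_mem_nhds ht))
  have hcontA : ContinuousOn (fun γ : ℝ => Real.log γ * f γ) (Set.Ioi (0:ℝ)) := by
    exact (Real.continuousOn_log.mono (fun γ hγ => ne_of_gt hγ)).mul hcont
  have hA' : ∀ t : ℝ, 1 < t → HasDerivAt A (-(Real.log t * f t)) t := by
    intro t ht
    have ht0 : (0:ℝ) < t := lt_trans one_pos ht
    exact tail_hasDerivAt hlog ht
      (ContinuousOn.stronglyMeasurableAtFilter isOpen_Ioi hcontA t ht0)
      (hcontA.continuousAt (Ioi_mem_nhds ht0))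
  -- derivative of Ifun
  have hI' : ∀ t : ℝ, 1 < t → HasDerivAt (Ifun f) (-(T t / t)) t := by
    intro t ht
    have ht0 : (0:ℝ) < t := lt_trans one_pos ht
    have hd : HasDerivAt (fun u => A u - Real.log u * T u)
        (-(Real.log t * f t) - (t⁻¹ * T t + Real.log t * (-f t))) t :=
      (hA' t ht).sub ((Real.hasDerivAt_log (ne_of_gt ht0)).mul (hT' t ht0))
    have hd2 : HasDerivAt (fun u => A u - Real.log u * T u) (-(T t / t)) t := by
      convert hd using 1
      field_simp
      ring
    refine hd2.congr_of_eventuallyEq ?_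
    filter_upwards [Ioi_mem_nhds ht] with u hu
    exact hI_eq u (le_of_lt hu)
  -- derivative of D
  have hD' : ∀ t : ℝ, 0 < t → HasDerivAt D (-(B t)) t := by
    intro t ht
    have hd : HasDerivAt (fun u => T u - u * B u)
        (-f t - (1 * B t + t * (-((1/t) * f t)))) t :=
      (hT' t ht).sub ((hasDerivAt_id t).mul (hB' t ht))
    have hd2 : HasDerivAt (fun u => T u - u * B u) (-(B t)) t := by
      convert hd using 1
      have htne : t ≠ 0 := ne_of_gt ht
      field_simp
      ring
    refine hd2.congr_of_eventuallyEq ?_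
    filter_upwards [Ioi_mem_nhds ht] with u hu
    exact (hD_eq u hu).symm ▸ rfl
  -- positivity of B
  have hBle : ∀ t : ℝ, 0 < t → B t ≤ T t / t := by
    intro t ht
    have : B t ≤ ∫ γ in Set.Ioi t, (1/t) * f γ := by
      refine setIntegral_mono_on (hBint t ht) ((hintt t (le_of_lt ht)).const_mul _)
        measurableSet_Ioi ?_
      intro γ hγ
      exact mul_le_mul_of_nonneg_right
        (one_div_le_one_div_of_le ht (le_of_lt hγ)) (hnn γ)
    rw [integral_const_mul] at this
    calc B t ≤ (1/t) * T t := this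
    _ = T t / t := by ring
  have hBpos : ∀ t : ℝ, 0 < t → 0 < B t := by
    intro t ht
    obtain ⟨s, hs, hTs⟩ : ∃ s, t ≤ s ∧ T s < T t := by
      have := hTtend.eventually_lt_const (hTpos t ht)
      rcases (this.and (eventually_ge_atTop t)).exists with ⟨s, h1, h2⟩
      exact ⟨s, h2, h1⟩
    have hs0 : (0:ℝ) < s := lt_of_lt_of_le ht hs
    have hsplit : ∫ γ in Set.Ioc t s, f γ = T t - T s := by
      have := tail_split hs (hintt t (le_of_lt ht))
      rw [intervalIntegral.integral_of_le hs] at this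
      simp only [hTdef] at this ⊢
      linarith
    have h1 : (1/s) * (T t - T s) ≤ ∫ γ in Set.Ioc t s, (1/γ) * f γ := by
      rw [← hsplit, ← integral_const_mul]
      refine setIntegral_mono_on (((hintt t (le_of_lt ht)).mono_set Set.Ioc_subset_Ioi_self).const_mul _)
        ((hBint t ht).mono_set Set.Ioc_subset_Ioi_self) measurableSet_Ioc ?_
      intro γ hγ
      exact mul_le_mul_of_nonneg_right
        (one_div_le_one_div_of_le (lt_trans ht hγ.1) hγ.2) (hnn γ)
    have h2 : ∫ γ in Set.Ioc t s, (1/γ) * f γ ≤ B t := by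
      refine setIntegral_mono_set (hBint t ht) ?_ (HasSubset.Subset.eventuallyLE Set.Ioc_subset_Ioi_self)
      filter_upwards [ae_restrict_mem measurableSet_Ioi] with γ hγ
      have h0 : (0:ℝ) < γ := lt_trans ht hγ
      exact mul_nonneg (by positivity) (hnn γ)
    have : (0:ℝ) < (1/s) * (T t - T s) := by
      apply mul_pos (by positivity)
      linarith
    linarith
  -- 0 ≤ D ≤ Ifun, Ifun nonneg, tends to 0
  have hDnn : ∀ t : ℝ, 0 < t → 0 ≤ D t := by
    intro t ht
    refine mul_nonneg (le_of_lt ht) (setIntegral_nonneg measurableSet_Ioi ?_)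
    intro γ hγ
    have hγ0 : (0:ℝ) < γ := lt_trans ht hγ
    apply mul_nonneg _ (hnn γ)
    have : 1/γ ≤ 1/t := one_div_le_one_div_of_le ht (le_of_lt hγ)
    linarith
  have hGint : ∀ t : ℝ, 0 < t → IntegrableOn (fun γ : ℝ => (1/t - 1/γ) * f γ) (Set.Ioi t) := by
    intro t ht
    refine (((hintt t ht.le).const_mul (1/t)).sub (hBint t ht)).congr ?_
    exact ae_of_all _ (fun γ => by simp only [Pi.sub_apply]; ring)
  have hIint : ∀ t : ℝ, 1 ≤ t → IntegrableOn (fun γ : ℝ => Real.log (γ / t) * f γ) (Set.Ioi t) := by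
    intro t ht
    have ht0 : (0:ℝ) < t := lt_of_lt_of_le one_pos ht
    refine ((hlogt t ht).sub ((hintt t ht0.le).const_mul (Real.log t))).congr ?_
    filter_upwards [ae_restrict_mem measurableSet_Ioi] with γ hγ
    simp only [Pi.sub_apply]
    rw [Real.log_div (ne_of_gt (lt_trans ht0 hγ)) (ne_of_gt ht0)]
    ring
  have hDleI : ∀ t : ℝ, 1 ≤ t → D t ≤ Ifun f t := by
    intro t ht
    have ht0 : (0:ℝ) < t := lt_of_lt_of_le one_pos ht
    have e1 : D t = ∫ γ in Set.Ioi t, t * ((1/t - 1/γ) * f γ) := by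
      simp only [hDdef, Gfun]
      rw [integral_const_mul]
    rw [e1, Ifun]
    refine setIntegral_mono_on ((hGint t ht0).const_mul t) (hIint t ht) measurableSet_Ioi ?_
    intro γ hγ
    have hγ0 : (0:ℝ) < γ := lt_trans ht0 hγ
    have hlog1 : Real.log (t/γ) ≤ t/γ - 1 := Real.log_le_sub_one_of_pos (by positivity)
    have hlb : 1 - t/γ ≤ Real.log (γ/t) := by
      rw [Real.log_div (ne_of_gt ht0) (ne_of_gt hγ0)] at hlog1
      rw [Real.log_div (ne_of_gt hγ0) (ne_of_gt ht0)]
      linarith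
    have h2 : t * ((1/t - 1/γ) * f γ) = (1 - t/γ) * f γ := by
      field_simp
    rw [h2]
    exact mul_le_mul_of_nonneg_right hlb (hnn γ)
  -- Ifun nonneg and tends to 0
  have hInn : ∀ t : ℝ, 1 ≤ t → 0 ≤ Ifun f t := by
    intro t ht
    refine setIntegral_nonneg measurableSet_Ioi ?_
    intro γ hγ
    have ht0 : (0:ℝ) < t := lt_of_lt_of_le one_pos ht
    have : (1:ℝ) ≤ γ / t := (one_le_div ht0).2 (le_of_lt hγ)
    exact mul_nonneg (Real.log_nonneg this) (hnn γ)
  have hIle : ∀ t : ℝ, 1 ≤ t → Ifun f t ≤ A t := by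
    intro t ht
    rw [hI_eq t ht]
    have : 0 ≤ Real.log t * T t :=
      mul_nonneg (Real.log_nonneg ht) (hTnn t (le_trans zero_le_one ht))
    linarith
  have hItend : Tendsto (Ifun f) atTop (𝓝 0) := by
    refine tendsto_of_tendsto_of_tendsto_of_le_of_le' tendsto_const_nhds hAtend ?_ ?_
    · filter_upwards [eventually_ge_atTop (1:ℝ)] with t ht using hInn t ht
    · filter_upwards [eventually_ge_atTop (1:ℝ)] with t ht using hIle t ht
  have hDtend : Tendsto D atTop (𝓝 0) := by
    refine tendsto_of_tendsto_of_tendsto_of_le_of_le' tendsto_const_nhds hItend ?_ ?_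
    · filter_upwards [eventually_gt_atTop (0:ℝ)] with t ht using hDnn t ht
    · filter_upwards [eventually_ge_atTop (1:ℝ)] with t ht using hDleI t ht
  -- the GFR hypothesis, rephrased
  have hGFR' : ∀ M : ℝ, 0 < M → ∀ᶠ t in atTop, M * T t ≤ t * f t := by
    intro M hM
    filter_upwards [hGFR.eventually_ge_atTop M, eventually_gt_atTop (0:ℝ)] with t h1 ht
    have hT := hTpos t ht
    rw [← hTF t ht.le] at h1
    exact (le_div_iff₀ hT).1 h1
  -- key estimate: D t ≤ T t / M eventually
  have hDT : ∀ M : ℝ, 0 < M → ∀ᶠ t in atTop, D t ≤ T t / M := by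
    intro M hM
    obtain ⟨t₀, h0⟩ := eventually_atTop.1 ((hGFR' M hM).and (eventually_ge_atTop (2:ℝ)))
    set t₁ : ℝ := max t₀ 2 with ht₁def
    have ht₁2 : (2:ℝ) ≤ t₁ := le_max_right _ _
    have h0' : ∀ t, t₁ ≤ t → M * T t ≤ t * f t ∧ (2:ℝ) ≤ t :=
      fun t htt => h0 t (le_trans (le_max_left _ _) htt)
    set H : ℝ → ℝ := fun t => T t / M - D t with hHdef
    have hH' : ∀ t : ℝ, 1 < t → HasDerivAt H (-f t / M - -B t) t :=
      fun t ht => ((hT' t (lt_trans one_pos ht)).div_const M).sub (hD' t (lt_trans one_pos ht))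
    have hanti : AntitoneOn H (Set.Ici t₁) := by
      refine antitoneOn_of_deriv_nonpos (convex_Ici t₁) ?_ ?_ ?_
      · intro x hx
        have hx1 : (1:ℝ) < x := lt_of_lt_of_le (by norm_num) (le_trans ht₁2 hx)
        exact (hH' x hx1).continuousAt.continuousWithinAt
      · intro x hx
        rw [interior_Ici] at hx
        have hx1 : (1:ℝ) < x := lt_of_lt_of_le (by norm_num) (le_trans ht₁2 hx.le)
        exact (hH' x hx1).differentiableAt.differentiableWithinAt
      · intro x hx
        rw [interior_Ici] at hx
        have hx1 : (1:ℝ) < x := lt_of_lt_of_le (by norm_num) (le_trans ht₁2 hx.le)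
        have hx0 : (0:ℝ) < x := lt_trans one_pos hx1
        rw [(hH' x hx1).deriv, neg_div]
        have h1 : B x ≤ T x / x := hBle x hx0
        have h2 : M * T x ≤ x * f x := (h0' x hx.le).1
        have h3 : T x / x ≤ f x / M := by
          rw [div_le_div_iff₀ hx0 hM]
          nlinarith
        linarith
    have hHtend : Tendsto H atTop (𝓝 0) := by
      have := (hTtend.div_const M).sub hDtend
      simpa using this
    filter_upwards [eventually_ge_atTop t₁] with t htt
    have hH0 : 0 ≤ H t := by
      refine le_of_tendsto hHtend ?_
      filter_upwards [eventually_ge_atTop t] with s hs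
      exact hanti (mem_Ici.2 htt) (mem_Ici.2 (le_trans htt hs)) hs
    simp only [hHdef] at hH0
    linarith
  -- hence D/T → 0
  have hDTtend : Tendsto (fun t => D t / T t) atTop (𝓝 0) := by
    rw [NormedAddCommGroup.tendsto_nhds_zero]
    intro ε hε
    have h2ε : (0:ℝ) < 2/ε := by positivity
    filter_upwards [hDT (2/ε) h2ε, eventually_gt_atTop (0:ℝ)] with t h1 ht
    have hT := hTpos t ht
    rw [Real.norm_eq_abs, abs_of_nonneg (div_nonneg (hDnn t ht) hT.le)]
    rw [div_div_eq_mul_div] at h1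
    rw [div_lt_iff₀ hT]
    nlinarith
  -- ratio of derivatives tends to 1
  have hratio : Tendsto (fun t => (-(T t / t)) / (-B t)) atTop (𝓝 1) := by
    have h1 : Tendsto (fun t => 1 / (1 - D t / T t)) atTop (𝓝 1) := by
      have h2 : Tendsto (fun t : ℝ => 1 - D t / T t) atTop (𝓝 1) := by
        have := tendsto_const_nhds (α := ℝ) (f := atTop) (x := (1:ℝ)) |>.sub hDTtend
        simpa using this
      have h4 := (tendsto_const_nhds (α := ℝ) (f := atTop) (x := (1:ℝ))).div h2 one_ne_zero
      have h5 : Tendsto (fun t : ℝ => (1:ℝ) / (1 - D t / T t)) atTop (𝓝 (1/1)) :=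
        Tendsto.congr (fun t => by simp [Pi.div_apply]) h4
      simpa using h5
    refine h1.congr' ?_
    filter_upwards [eventually_gt_atTop (0:ℝ)] with t ht
    have hT := hTpos t ht
    have hB := hBpos t ht
    have htB : t * B t = T t - D t := by rw [hD_eq t ht]; ring
    have e1 : (-(T t / t)) / (-B t) = T t / (t * B t) := by
      rw [neg_div_neg_eq, div_div]
    rw [e1, htB, one_sub_div (ne_of_gt hT), one_div_div]
  -- L'Hôpital
  have final : Tendsto (fun x => Ifun f x / D x) atTop (𝓝 1) := by
    refine HasDerivAt.lhopital_zero_atTop (f' := fun t => -(T t / t)) (g' := fun t => -B t)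
      ?_ ?_ ?_ hItend hDtend hratio
    · filter_upwards [eventually_gt_atTop (1:ℝ)] with t ht using hI' t ht
    · filter_upwards [eventually_gt_atTop (0:ℝ)] with t ht using hD' t ht
    · filter_upwards [eventually_gt_atTop (0:ℝ)] with t ht
      exact neg_ne_zero.2 (ne_of_gt (hBpos t ht))
  exact final
end

section
/- Fix K ≥ 1 and an index k, and assume each distribution has infinite support, i.e. F_i(t) < 1 for all t > 0 and all i. Let (λ^{(n)})_n be a sequence of vectors in (0,∞)^K with λ_i^{(n)} → ∞ for every i = 1,…,K. Then the ratio [∫_{λ_k^{(n)}}^∞ (1/λ_k^{(n)} − 1/h) · ∏_{i≠k} F_i((λ_i^{(n)}/λ_k^{(n)})·h) · f_k(h) dh] / [∫_{λ_k^{(n)}}^∞ (1/λ_k^{(n)} − 1/h) f_k(h) dh] tends to 1 as n → ∞. (Asymptotic equivalence (E315): at low power the multi-user power constraint integral coincides with the single-user one.) -/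
open MeasureTheory Filter Set Topology

section Aux

variable {f : ℝ → ℝ}

lemma integrable_of_zero_neg (hmeas : Measurable f) (hzero : ∀ x ≤ (0:ℝ), f x = 0)
    (hint : IntegrableOn f (Set.Ioi (0:ℝ))) : Integrable f := by
  have hf : f = (Set.Ioi (0:ℝ)).indicator f := by
    ext x
    by_cases hx : x ∈ Set.Ioi (0:ℝ)
    · simp [Set.indicator_of_mem hx]
    · simp [Set.indicator_of_notMem hx, hzero x (by simpa using hx)]
  rw [hf]
  exact (integrable_indicator_iff measurableSet_Ioi).2 hint

lemma Fcdf_mono (hmeas : Measurable f) (hzero : ∀ x ≤ (0:ℝ), f x = 0)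
    (hnn : ∀ x, 0 ≤ f x) (hint : IntegrableOn f (Set.Ioi (0:ℝ)))
    {s t : ℝ} (hst : s ≤ t) : Fcdf f s ≤ Fcdf f t := by
  have hI := integrable_of_zero_neg hmeas hzero hint
  have h1 : Fcdf f s + ∫ γ in s..t, f γ = Fcdf f t :=
    intervalIntegral.integral_add_adjacent_intervals hI.intervalIntegrable
      hI.intervalIntegrable
  have h2 : 0 ≤ ∫ γ in s..t, f γ :=
    intervalIntegral.integral_nonneg hst (fun x _ => hnn x)
  linarith

lemma Fcdf_nonneg (hnn : ∀ x, 0 ≤ f x) {t : ℝ} (ht : 0 ≤ t) : 0 ≤ Fcdf f t :=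
  intervalIntegral.integral_nonneg ht (fun x _ => hnn x)

lemma Fcdf_eq_setIntegral {t : ℝ} (ht : 0 ≤ t) :
    Fcdf f t = ∫ γ in Set.Ioc (0:ℝ) t, f γ := by
  rw [Fcdf, intervalIntegral.integral_of_le ht]

lemma Fcdf_le_one (hnn : ∀ x, 0 ≤ f x) (hint : IntegrableOn f (Set.Ioi (0:ℝ)))
    (hone : ∫ γ in Set.Ioi (0:ℝ), f γ = 1) {t : ℝ} (ht : 0 ≤ t) : Fcdf f t ≤ 1 := by
  rw [Fcdf_eq_setIntegral ht, ← hone]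
  refine setIntegral_mono_set hint ?_ ?_
  · exact Filter.Eventually.of_forall fun x => hnn x
  · exact (Set.Ioc_subset_Ioi_self).eventuallyLE

lemma integral_Ioi_split (hmeas : Measurable f) (hint : IntegrableOn f (Set.Ioi (0:ℝ)))
    {c : ℝ} (hc : 0 < c) :
    ∫ γ in Set.Ioi (0:ℝ), f γ = Fcdf f c + ∫ γ in Set.Ioi c, f γ := by
  rw [Fcdf_eq_setIntegral hc.le]
  rw [← setIntegral_union (Set.Ioc_disjoint_Ioi le_rfl) measurableSet_Ioi
      (hint.mono_set Set.Ioc_subset_Ioi_self) (hint.mono_set fun x hx => lt_trans hc hx)]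
  rw [Set.Ioc_union_Ioi_eq_Ioi hc.le]

end Aux

/-- Asymptotic equivalence (E315): along any sequence of multiplier vectors all of
whose coordinates tend to `∞`, the multi-user power constraint integral
`G_k(λ^{(n)})` of (E307) is asymptotically equal to the single-user one. -/
theorem mac_power_integral_asymptotic (K : ℕ) (hK : 1 ≤ K) (k : Fin K)
    (f : Fin K → ℝ → ℝ)
    (hmeas : ∀ i, Measurable (f i))
    (hnn : ∀ i x, 0 ≤ f i x)
    (hzero : ∀ i, ∀ x ≤ (0:ℝ), f i x = 0)
    (hint : ∀ i, IntegrableOn (f i) (Set.Ioi (0:ℝ)))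
    (hone : ∀ i, ∫ γ in Set.Ioi (0:ℝ), f i γ = 1)
    (hsupp : ∀ i, ∀ t > (0:ℝ), Fcdf (f i) t < 1)
    (lam : ℕ → Fin K → ℝ) (hlam : ∀ n i, 0 < lam n i)
    (htend : ∀ i, Tendsto (fun n => lam n i) atTop atTop) :
    Tendsto
      (fun n =>
        (∫ h in Set.Ioi (lam n k),
            (1 / lam n k - 1 / h) *
              (∏ i ∈ Finset.univ.erase k, Fcdf (f i) (lam n i / lam n k * h)) *
                f k h) /
          ∫ h in Set.Ioi (lam n k), (1 / lam n k - 1 / h) * f k h)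
      atTop (nhds 1) := by
  -- notation
  set N : ℕ → ℝ := fun n =>
    ∫ h in Set.Ioi (lam n k),
      (1 / lam n k - 1 / h) *
        (∏ i ∈ Finset.univ.erase k, Fcdf (f i) (lam n i / lam n k * h)) * f k h with hN
  set D : ℕ → ℝ := fun n => ∫ h in Set.Ioi (lam n k), (1 / lam n k - 1 / h) * f k h with hD
  set c : ℕ → ℝ := fun n => ∏ i ∈ Finset.univ.erase k, Fcdf (f i) (lam n i) with hc
  -- basic facts for each n
  have key : ∀ n, c n ≤ N n / D n ∧ N n / D n ≤ 1 := by
    intro n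
    set a := lam n k with ha
    have ha0 : 0 < a := hlam n k
    -- integrability of the denominator integrand
    have hDint : IntegrableOn (fun h => (1 / a - 1 / h) * f k h) (Set.Ioi a) := by
      have hI : IntegrableOn (fun h => (1 / a) * f k h) (Set.Ioi a) :=
        ((hint k).mono_set (fun x hx => lt_trans ha0 hx)).const_mul _
      refine MeasureTheory.Integrable.mono hI ?_ ?_
      · exact ((measurable_const.sub (measurable_const.div measurable_id)).mul
          (hmeas k)).aestronglyMeasurable
      · filter_upwards [ae_restrict_mem measurableSet_Ioi] with x hx
        have hx0 : 0 < x := lt_trans ha0 hx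
        have h1 : 0 ≤ 1 / a - 1 / x := by
          have : 1 / x ≤ 1 / a := one_div_le_one_div_of_le ha0 (le_of_lt hx)
          linarith
        have h2 : 1 / a - 1 / x ≤ 1 / a := by
          have : 0 ≤ 1 / x := by positivity
          linarith
        simp only [Real.norm_eq_abs]
        rw [abs_of_nonneg (mul_nonneg h1 (hnn k x)), abs_of_nonneg
          (mul_nonneg (by positivity) (hnn k x))]
        exact mul_le_mul_of_nonneg_right h2 (hnn k x)
    -- measurability / continuity of the product factor
    have hcont : Continuous fun h : ℝ =>
        ∏ i ∈ Finset.univ.erase k, Fcdf (f i) (lam n i / a * h) := by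
      refine continuous_finset_prod _ fun i _ => ?_
      have hIi := integrable_of_zero_neg (hmeas i) (hzero i) (hint i)
      exact (hIi.continuous_primitive 0).comp (continuous_const.mul continuous_id)
    -- pointwise bounds on the product factor
    have hprod_le_one : ∀ h ∈ Set.Ioi a,
        (∏ i ∈ Finset.univ.erase k, Fcdf (f i) (lam n i / a * h)) ≤ 1 := by
      intro h hh
      have hh0 : 0 < h := lt_trans ha0 hh
      refine Finset.prod_le_one (fun i _ => ?_) (fun i _ => ?_)
      · exact Fcdf_nonneg (hnn i) (mul_pos (div_pos (hlam n i) ha0) hh0).le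
      · exact Fcdf_le_one (hnn i) (hint i) (hone i)
          (mul_pos (div_pos (hlam n i) ha0) hh0).le
    have hprod_ge : ∀ h ∈ Set.Ioi a,
        c n ≤ ∏ i ∈ Finset.univ.erase k, Fcdf (f i) (lam n i / a * h) := by
      intro h hh
      refine Finset.prod_le_prod (fun i _ => Fcdf_nonneg (hnn i) (hlam n i).le)
        (fun i _ => ?_)
      refine Fcdf_mono (hmeas i) (hzero i) (hnn i) (hint i) ?_
      have : lam n i / a * a ≤ lam n i / a * h :=
        mul_le_mul_of_nonneg_left (le_of_lt hh) (div_pos (hlam n i) ha0).le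
      calc lam n i = lam n i / a * a := by field_simp
        _ ≤ lam n i / a * h := this
    have hprod_nonneg : ∀ h ∈ Set.Ioi a,
        0 ≤ ∏ i ∈ Finset.univ.erase k, Fcdf (f i) (lam n i / a * h) := by
      intro h hh
      have hh0 : 0 < h := lt_trans ha0 hh
      exact Finset.prod_nonneg fun i _ =>
        Fcdf_nonneg (hnn i) (mul_pos (div_pos (hlam n i) ha0) hh0).le
    have hwt : ∀ h ∈ Set.Ioi a, 0 ≤ 1 / a - 1 / h := by
      intro h hh
      have : 1 / h ≤ 1 / a := one_div_le_one_div_of_le ha0 (le_of_lt hh)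
      linarith
    -- integrability of the numerator integrand
    have hNint : IntegrableOn (fun h => (1 / a - 1 / h) *
        (∏ i ∈ Finset.univ.erase k, Fcdf (f i) (lam n i / a * h)) * f k h)
        (Set.Ioi a) := by
      refine MeasureTheory.Integrable.mono hDint ?_ ?_
      · exact (((measurable_const.sub (measurable_const.div measurable_id)).mul
          hcont.measurable).mul (hmeas k)).aestronglyMeasurable
      · filter_upwards [ae_restrict_mem measurableSet_Ioi] with x hx
        have h1 := hwt x hx
        have h2 := hprod_le_one x hx
        have h3 := hprod_nonneg x hx
        simp only [Real.norm_eq_abs]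
        rw [abs_of_nonneg (mul_nonneg (mul_nonneg h1 h3) (hnn k x)),
          abs_of_nonneg (mul_nonneg h1 (hnn k x))]
        calc (1 / a - 1 / x) * (∏ i ∈ Finset.univ.erase k,
                Fcdf (f i) (lam n i / a * x)) * f k x
            ≤ (1 / a - 1 / x) * 1 * f k x := by
              exact mul_le_mul_of_nonneg_right
                (mul_le_mul_of_nonneg_left h2 h1) (hnn k x)
          _ = (1 / a - 1 / x) * f k x := by ring
    -- N ≤ D
    have hND : N n ≤ D n := by
      refine setIntegral_mono_on hNint hDint measurableSet_Ioi fun x hx => ?_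
      calc (1 / a - 1 / x) * (∏ i ∈ Finset.univ.erase k,
              Fcdf (f i) (lam n i / a * x)) * f k x
          ≤ (1 / a - 1 / x) * 1 * f k x :=
            mul_le_mul_of_nonneg_right
              (mul_le_mul_of_nonneg_left (hprod_le_one x hx) (hwt x hx)) (hnn k x)
        _ = (1 / a - 1 / x) * f k x := by ring
    -- c * D ≤ N
    have hcD : c n * D n ≤ N n := by
      rw [hD, ← MeasureTheory.integral_const_mul]
      refine setIntegral_mono_on (hDint.const_mul _) hNint measurableSet_Ioi
        fun x hx => ?_
      calc c n * ((1 / a - 1 / x) * f k x)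
          = (1 / a - 1 / x) * c n * f k x := by ring
        _ ≤ (1 / a - 1 / x) * (∏ i ∈ Finset.univ.erase k,
              Fcdf (f i) (lam n i / a * x)) * f k x :=
            mul_le_mul_of_nonneg_right
              (mul_le_mul_of_nonneg_left (hprod_ge x hx) (hwt x hx)) (hnn k x)
    -- D > 0
    have hDpos : 0 < D n := by
      have h2a : (0:ℝ) < 2 * a := by linarith
      have htail : 0 < ∫ γ in Set.Ioi (2 * a), f k γ := by
        have hsplit := integral_Ioi_split (hmeas k) (hint k) h2a
        have := hsupp k (2 * a) h2a
        rw [hone k] at hsplit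
        linarith
      have hstep1 : (1 / (2 * a)) * ∫ γ in Set.Ioi (2 * a), f k γ
          ≤ ∫ h in Set.Ioi (2 * a), (1 / a - 1 / h) * f k h := by
        rw [← MeasureTheory.integral_const_mul]
        refine setIntegral_mono_on
          (((hint k).mono_set (fun x hx => lt_trans h2a hx)).const_mul _)
          (hDint.mono_set (fun x hx => lt_trans (by linarith : a < 2 * a) hx))
          measurableSet_Ioi fun x hx => ?_
        have hx2a : 2 * a < x := hx
        have h1 : 1 / x ≤ 1 / (2 * a) := one_div_le_one_div_of_le h2a hx2a.le
        have h2 : 1 / (2 * a) ≤ 1 / a - 1 / x := by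
          have : 1 / (2 * a) = 1 / a - 1 / (2 * a) := by field_simp; ring
          linarith
        exact mul_le_mul_of_nonneg_right h2 (hnn k x)
      have hstep2 : (∫ h in Set.Ioi (2 * a), (1 / a - 1 / h) * f k h) ≤ D n := by
        refine setIntegral_mono_set hDint ?_ ?_
        · filter_upwards [ae_restrict_mem measurableSet_Ioi] with x hx
          exact mul_nonneg (hwt x hx) (hnn k x)
        · exact (Set.Ioi_subset_Ioi (by linarith : a ≤ 2 * a)).eventuallyLE
      have : 0 < (1 / (2 * a)) * ∫ γ in Set.Ioi (2 * a), f k γ := by positivity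
      linarith
    constructor
    · rw [le_div_iff₀ hDpos]; exact hcD
    · rw [div_le_one hDpos]; exact hND
  -- c n → 1
  have hctend : Tendsto c atTop (𝓝 1) := by
    have : Tendsto c atTop (𝓝 (∏ i ∈ Finset.univ.erase k, (1:ℝ))) := by
      refine tendsto_finset_prod _ fun i _ => ?_
      have := MeasureTheory.intervalIntegral_tendsto_integral_Ioi 0 (hint i) (htend i)
      rw [hone i] at this
      exact this
    simpa using this
  exact tendsto_of_tendsto_of_tendsto_of_le_of_le hctend tendsto_const_nhds
    (fun n => (key n).1) (fun n => (key n).2)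
end
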